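/- Spatial total variation diminishing property with geometric weights under the weaker CFL condition: assume the weights are geometric, γ_k = γ₀ (1−γ₀)^k with γ₀ ∈ (0,1), and assume the CFL condition λ(M + L) ≤ 1. Then for every n ∈ ℕ: ∑_{j∈ℤ} |W^{n+1}_{j+1} − W^{n+1}_j| ≤ ∑_{j∈ℤ} |Wⁿ_{j+1} − Wⁿ_j| ≤ ∑_{j∈ℤ} |ρ⁰_{j+1} − ρ⁰_j|, where the sums of nonnegative terms are valued in [0,∞]. -/

import Mathlib

open scoped ENNReal

set_option maxHeartbeats 2000000 in
/-- Spatial total variation diminishing property with geometric weights,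
under the weaker CFL condition `λ (M + L) ≤ 1`. -/
theorem godunov_W_TVD_space_geometric
    (lam M L : ℝ) (hlam : 0 < lam) (hM : 0 ≤ M) (hL : 0 ≤ L)
    (V : ℝ → ℝ)
    (hVlip : ∀ x y : ℝ, |V x - V y| ≤ L * |x - y|)
    (hVmono : ∀ x ∈ Set.Icc (0:ℝ) 1, ∀ y ∈ Set.Icc (0:ℝ) 1, x ≤ y → V y ≤ V x)
    (hVbd : ∀ ξ ∈ Set.Icc (0:ℝ) 1, V ξ ∈ Set.Icc (0:ℝ) M)
    (γ : ℕ → ℝ)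
    (hγnn : ∀ k, 0 ≤ γ k) (hγmono : ∀ k, γ (k+1) ≤ γ k)
    (hγsum : HasSum γ 1)
    (ρ0 : ℤ → ℝ) (hρ0 : ∀ j, ρ0 j ∈ Set.Icc (0:ℝ) 1)
    (ρ W : ℕ → ℤ → ℝ)
    (hinit : ∀ j : ℤ, ρ 0 j = ρ0 j)
    (hW : ∀ (n : ℕ) (j : ℤ), W n j = ∑' k : ℕ, γ k * ρ n (j + (k:ℤ)))
    (hupd : ∀ (n : ℕ) (j : ℤ),
      ρ (n+1) j = ρ n j + lam * (ρ n (j-1) * V (W n j) - ρ n j * V (W n (j+1))))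
    (hCFL : lam * (M + L) ≤ 1)
    (γ0 : ℝ) (hγ0 : γ0 ∈ Set.Ioo (0:ℝ) 1)
    (hgeom : ∀ k : ℕ, γ k = γ0 * (1 - γ0)^k) :
    ∀ n : ℕ,
      (∑' j : ℤ, ENNReal.ofReal |W (n+1) (j+1) - W (n+1) j| ≤
        ∑' j : ℤ, ENNReal.ofReal |W n (j+1) - W n j|) ∧
      (∑' j : ℤ, ENNReal.ofReal |W n (j+1) - W n j| ≤
        ∑' j : ℤ, ENNReal.ofReal |ρ0 (j+1) - ρ0 j|) := by
  obtain ⟨hγ0pos, hγ0lt⟩ := hγ0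
  have h1γpos : 0 < 1 - γ0 := by linarith
  have hγs : Summable γ := hγsum.summable
  have hγtsum : ∑' k, γ k = 1 := hγsum.tsum_eq
  have hγsucc : ∀ k, γ (k+1) = (1 - γ0) * γ k := by
    intro k; rw [hgeom, hgeom]; ring
  have hlamM : lam * M ≤ 1 := by nlinarith
  ---- generic facts about weighted sums
  have hsummable : ∀ (f : ℤ → ℝ) (C : ℝ), (∀ m, |f m| ≤ C) → ∀ j : ℤ,
      Summable (fun k : ℕ => γ k * f (j + (k:ℤ))) := by
    intro f C hf j
    apply Summable.of_norm_bounded (hγs.mul_right C)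
    intro k
    rw [Real.norm_eq_abs, abs_mul, abs_of_nonneg (hγnn k)]
    exact mul_le_mul_of_nonneg_left (hf _) (hγnn k)
  have hsplit : ∀ (f : ℤ → ℝ) (C : ℝ), (∀ m, |f m| ≤ C) → ∀ j : ℤ,
      ∑' k : ℕ, γ k * f (j + (k:ℤ)) = γ0 * f j + (1 - γ0) * ∑' k : ℕ, γ k * f ((j+1) + (k:ℤ)) := by
    intro f C hf j
    rw [Summable.tsum_eq_zero_add (hsummable f C hf j)]
    have h0 : γ 0 = γ0 := by rw [hgeom]; simp
    have hre : ∀ k : ℕ, γ (k+1) * f (j + ((k:ℕ)+1:ℕ)) = (1-γ0) * (γ k * f ((j+1) + (k:ℤ))) := by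
      intro k
      rw [hγsucc]
      have : (j + (((k:ℕ)+1:ℕ) : ℤ)) = (j+1) + (k:ℤ) := by push_cast; ring
      rw [this]; ring
    rw [tsum_congr hre, tsum_mul_left, h0]
    simp
  have habs_tsum : ∀ (f : ℤ → ℝ) (C : ℝ), (∀ m, |f m| ≤ C) → ∀ j : ℤ,
      |∑' k : ℕ, γ k * f (j + (k:ℤ))| ≤ C := by
    intro f C hf j
    have h1 : |∑' k : ℕ, γ k * f (j + (k:ℤ))| ≤ ∑' k : ℕ, |γ k * f (j + (k:ℤ))| := by
      have := norm_tsum_le_tsum_norm (f := fun k : ℕ => γ k * f (j + (k:ℤ)))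
        (by simpa only [Real.norm_eq_abs] using (hsummable f C hf j).abs)
      simpa only [Real.norm_eq_abs] using this
    have h2 : ∑' k : ℕ, |γ k * f (j + (k:ℤ))| ≤ ∑' k : ℕ, γ k * C := by
      apply Summable.tsum_le_tsum _ (hsummable f C hf j).abs (hγs.mul_right C)
      intro k
      rw [abs_mul, abs_of_nonneg (hγnn k)]
      exact mul_le_mul_of_nonneg_left (hf _) (hγnn k)
    have h3 : ∑' k : ℕ, γ k * C = C := by rw [tsum_mul_right, hγtsum, one_mul]
    linarith
  have habs : ∀ (f : ℤ → ℝ), (∀ m, f m ∈ Set.Icc (0:ℝ) 1) → ∀ m, |f m| ≤ 1 := by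
    intro f hf m
    rw [abs_le]; constructor <;> [linarith [(hf m).1]; exact (hf m).2]
  ---- conditional facts, then the maximum principle
  have hWidc : ∀ n, (∀ m, ρ n m ∈ Set.Icc (0:ℝ) 1) → ∀ j,
      W n j = γ0 * ρ n j + (1-γ0) * W n (j+1) := by
    intro n hn j
    rw [hW n j, hW n (j+1)]
    exact hsplit _ 1 (habs _ hn) j
  have hWmemc : ∀ n, (∀ m, ρ n m ∈ Set.Icc (0:ℝ) 1) → ∀ j, W n j ∈ Set.Icc (0:ℝ) 1 := by
    intro n hn j
    rw [hW n j]
    constructor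
    · exact tsum_nonneg fun k => mul_nonneg (hγnn k) (hn _).1
    · calc ∑' k : ℕ, γ k * ρ n (j + (k:ℤ)) ≤ ∑' k, γ k := by
            apply Summable.tsum_le_tsum _ (hsummable _ 1 (habs _ hn) j) hγs
            intro k
            nlinarith [(hn (j + (k:ℤ))).1, (hn (j + (k:ℤ))).2, hγnn k]
        _ = 1 := hγtsum
  have hρmem : ∀ n m, ρ n m ∈ Set.Icc (0:ℝ) 1 := by
    intro n
    induction n with
    | zero => intro j; rw [hinit j]; exact hρ0 j
    | succ n ih =>
      intro j
      have hWm := hWmemc n ih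
      have hVj := hVbd _ (hWm j)
      have hVj1 := hVbd _ (hWm (j+1))
      have hgeo := hWidc n ih j
      have hρj := ih j; have hρj1 := ih (j-1)
      rw [hupd n j]
      have h1 : lam * V (W n (j+1)) ≤ 1 := by nlinarith [hVj1.2, hVj1.1]
      constructor
      · have hint1 : 0 ≤ ρ n j * (1 - lam * V (W n (j+1))) :=
          mul_nonneg hρj.1 (by linarith)
        have hint2 : 0 ≤ lam * (ρ n (j-1) * V (W n j)) :=
          mul_nonneg hlam.le (mul_nonneg hρj1.1 hVj.1)
        nlinarith [hint1, hint2]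
      · have hρj2 : 0 ≤ 1 - ρ n j := by linarith [hρj.2]
        rcases le_or_gt (W n (j+1)) (ρ n j) with hc | hc
        · have hWge : W n (j+1) ≤ W n j := by nlinarith
          have hVle : V (W n j) ≤ V (W n (j+1)) := hVmono _ (hWm (j+1)) _ (hWm j) hWge
          have t1 : ρ n (j-1) * V (W n j) ≤ ρ n (j-1) * V (W n (j+1)) :=
            mul_le_mul_of_nonneg_left hVle hρj1.1
          have t2 : ρ n (j-1) * V (W n (j+1)) ≤ V (W n (j+1)) :=
            mul_le_of_le_one_left hVj1.1 hρj1.2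
          have t3 : ρ n (j-1) * V (W n j) - ρ n j * V (W n (j+1)) ≤
              V (W n (j+1)) * (1 - ρ n j) := by nlinarith [t1, t2]
          have t4 : lam * (V (W n (j+1)) * (1 - ρ n j)) ≤ 1 - ρ n j := by
            nlinarith [mul_nonneg hρj2 (by linarith : (0:ℝ) ≤ 1 - lam * V (W n (j+1)))]
          have t5 : lam * (ρ n (j-1) * V (W n j) - ρ n j * V (W n (j+1))) ≤
              lam * (V (W n (j+1)) * (1 - ρ n j)) := mul_le_mul_of_nonneg_left t3 hlam.le
          linarith
        · have hWlt : W n j - W n (j+1) = γ0 * (ρ n j - W n (j+1)) := by linarith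
          have hlip := hVlip (W n j) (W n (j+1))
          have habs2 : |W n j - W n (j+1)| = γ0 * (W n (j+1) - ρ n j) := by
            rw [hWlt, abs_mul, abs_of_nonneg (le_of_lt hγ0pos), abs_of_neg (by nlinarith)]
            ring
          have hVle : V (W n j) ≤ V (W n (j+1)) + L * (γ0 * (W n (j+1) - ρ n j)) := by
            have h2 : V (W n j) - V (W n (j+1)) ≤ |V (W n j) - V (W n (j+1))| := le_abs_self _
            rw [habs2] at hlip
            linarith
          have t1 : ρ n (j-1) * V (W n j) ≤ V (W n j) := mul_le_of_le_one_left hVj.1 hρj1.2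
          have t2 : γ0 * (W n (j+1) - ρ n j) ≤ 1 - ρ n j := by
            nlinarith [(hWm (j+1)).2,
              mul_nonneg (by linarith : (0:ℝ) ≤ 1 - γ0) (by linarith : (0:ℝ) ≤ W n (j+1) - ρ n j)]
          have t3 : V (W n j) ≤ V (W n (j+1)) + L * (1 - ρ n j) := by
            have := mul_le_mul_of_nonneg_left t2 hL
            linarith
          have t4 : ρ n (j-1) * V (W n j) - ρ n j * V (W n (j+1)) ≤
              (V (W n (j+1)) + L) * (1 - ρ n j) := by nlinarith [hVj1.1, hρj.1]
          have t5 : (V (W n (j+1)) + L) * (1 - ρ n j) ≤ (M + L) * (1 - ρ n j) :=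
            mul_le_mul_of_nonneg_right (by linarith [hVj1.2]) hρj2
          have t6 : lam * ((M + L) * (1 - ρ n j)) ≤ 1 - ρ n j := by
            nlinarith [mul_nonneg hρj2 (by linarith : (0:ℝ) ≤ 1 - lam * (M + L))]
          have t7 : lam * (ρ n (j-1) * V (W n j) - ρ n j * V (W n (j+1))) ≤
              lam * ((M + L) * (1 - ρ n j)) :=
            mul_le_mul_of_nonneg_left (t4.trans t5) hlam.le
          linarith
  ---- unconditional versions
  have hρb : ∀ n m, |ρ n m| ≤ 1 := fun n => habs _ (hρmem n)
  have hWm : ∀ n j, W n j ∈ Set.Icc (0:ℝ) 1 := fun n => hWmemc n (hρmem n)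
  have hWid : ∀ n j, W n j = γ0 * ρ n j + (1-γ0) * W n (j+1) := fun n => hWidc n (hρmem n)
  have hWb : ∀ n m, |W n m| ≤ 1 := fun n => habs _ (hWm n)
  ---- ENNReal helpers
  have hγ1 : ∑' k : ℕ, ENNReal.ofReal (γ k) = 1 := by
    rw [← ENNReal.ofReal_tsum_of_nonneg hγnn hγs, hγtsum, ENNReal.ofReal_one]
  have hshift : ∀ (ψ : ℤ → ℝ≥0∞) (c : ℤ), ∑' j : ℤ, ψ (j + c) = ∑' m : ℤ, ψ m :=
    fun ψ c => (Equiv.addRight c).tsum_eq ψ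
  have hswap : ∀ (h : ℤ → ℝ), (∀ m, 0 ≤ h m) →
      ∑' (j : ℤ) (k : ℕ), ENNReal.ofReal (γ k * h (j + (k:ℤ))) =
        ∑' m : ℤ, ENNReal.ofReal (h m) := by
    intro h hh
    have e1 : ∀ (j : ℤ) (k : ℕ), ENNReal.ofReal (γ k * h (j + (k:ℤ))) =
        ENNReal.ofReal (γ k) * ENNReal.ofReal (h (j + (k:ℤ))) := by
      intro j k; rw [ENNReal.ofReal_mul (hγnn k)]
    calc ∑' (j : ℤ) (k : ℕ), ENNReal.ofReal (γ k * h (j + (k:ℤ)))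
        = ∑' (j : ℤ) (k : ℕ), ENNReal.ofReal (γ k) * ENNReal.ofReal (h (j + (k:ℤ))) :=
          tsum_congr fun j => tsum_congr fun k => e1 j k
      _ = ∑' (k : ℕ) (j : ℤ), ENNReal.ofReal (γ k) * ENNReal.ofReal (h (j + (k:ℤ))) :=
          ENNReal.tsum_comm
      _ = ∑' (k : ℕ), ENNReal.ofReal (γ k) * ∑' (j : ℤ), ENNReal.ofReal (h (j + (k:ℤ))) := by
          exact tsum_congr fun k => ENNReal.tsum_mul_left
      _ = ∑' (k : ℕ), ENNReal.ofReal (γ k) * ∑' m : ℤ, ENNReal.ofReal (h m) := by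
          exact tsum_congr fun k => by rw [hshift (fun m => ENNReal.ofReal (h m)) (k:ℤ)]
      _ = (∑' (k : ℕ), ENNReal.ofReal (γ k)) * ∑' m : ℤ, ENNReal.ofReal (h m) := by
          rw [ENNReal.tsum_mul_right]
      _ = ∑' m : ℤ, ENNReal.ofReal (h m) := by rw [hγ1, one_mul]
  ---- Part 1: one-step TVD for W
  have key1 : ∀ n : ℕ,
      ∑' j : ℤ, ENNReal.ofReal |W (n+1) (j+1) - W (n+1) j| ≤
        ∑' j : ℤ, ENNReal.ofReal |W n (j+1) - W n j| := by
    intro n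
    obtain ⟨F, hF⟩ : ∃ F : ℤ → ℝ, ∀ m, F m = ρ n (m-1) * V (W n m) := ⟨_, fun _ => rfl⟩
    obtain ⟨S, hSdef⟩ : ∃ S : ℤ → ℝ, ∀ j, S j = ∑' k : ℕ, γ k * F ((j+1) + (k:ℤ)) :=
      ⟨_, fun _ => rfl⟩
    have hVWbd : ∀ m, V (W n m) ∈ Set.Icc (0:ℝ) M := fun m => hVbd _ (hWm n m)
    have hFbd : ∀ m, |F m| ≤ M := by
      intro m
      rw [hF, abs_of_nonneg (mul_nonneg (hρmem n (m-1)).1 (hVWbd m).1)]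
      nlinarith [(hρmem n (m-1)).1, (hρmem n (m-1)).2, (hVWbd m).1, (hVWbd m).2]
    have hSbd : ∀ j, |S j| ≤ M := by intro j; rw [hSdef]; exact habs_tsum F M hFbd (j+1)
    have hSrec : ∀ j, S j = γ0 * F (j+1) + (1-γ0) * S (j+1) := by
      intro j; rw [hSdef, hSdef]; exact hsplit F M hFbd (j+1)
    have hρupd : ∀ m, ρ (n+1) m = ρ n m + lam * (F m - F (m+1)) := by
      intro m
      rw [hupd n m, hF m, hF (m+1)]
      simp only [add_sub_cancel_right]
    have hWupd : ∀ j, W (n+1) j = W n j + lam * γ0 * (F j - S j) := by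
      intro j
      have hsum1 : Summable (fun k : ℕ => γ k * ρ n (j + (k:ℤ))) := hsummable _ 1 (hρb n) j
      have hsum2 : Summable (fun k : ℕ => γ k * F (j + (k:ℤ))) := hsummable F M hFbd j
      have hsum3 : Summable (fun k : ℕ => γ k * F ((j+1) + (k:ℤ))) := hsummable F M hFbd (j+1)
      have hterm : ∀ k : ℕ, γ k * ρ (n+1) (j + (k:ℤ)) =
          (γ k * ρ n (j + (k:ℤ)) + lam * (γ k * F (j + (k:ℤ))))
            - lam * (γ k * F ((j+1) + (k:ℤ))) := by
        intro k
        rw [hρupd (j + (k:ℤ))]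
        have hidx : (j + (k:ℤ)) + 1 = (j+1) + (k:ℤ) := by ring
        rw [hidx]; ring
      rw [hW (n+1) j, tsum_congr hterm,
        Summable.tsum_sub (hsum1.add (hsum2.mul_left lam)) (hsum3.mul_left lam),
        Summable.tsum_add hsum1 (hsum2.mul_left lam), tsum_mul_left, tsum_mul_left,
        hsplit F M hFbd j, ← hSdef j, ← hW n j]
      ring
    -- incremental slope of V
    obtain ⟨a, ha⟩ : ∃ a : ℤ → ℝ, ∀ m, a m = if W n (m+1) = W n m then 0
        else (V (W n m) - V (W n (m+1))) / (W n (m+1) - W n m) := ⟨_, fun _ => rfl⟩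
    have ha1 : ∀ m, V (W n m) - V (W n (m+1)) = a m * (W n (m+1) - W n m) := by
      intro m; rw [ha]
      by_cases h : W n (m+1) = W n m
      · rw [if_pos h, h]; ring
      · rw [if_neg h, div_mul_cancel₀]
        exact sub_ne_zero.mpr h
    have ha0 : ∀ m, 0 ≤ a m := by
      intro m; rw [ha]
      by_cases h : W n (m+1) = W n m
      · simp [h]
      · rw [if_neg h]
        rcases lt_or_gt_of_ne (fun hh => h hh.symm) with hlt | hgt
        · -- W n m < W n (m+1)
          apply div_nonneg _ (by linarith)
          have := hVmono _ (hWm n m) _ (hWm n (m+1)) hlt.le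
          linarith
        · apply div_nonneg_iff.mpr
          right
          constructor
          · have := hVmono _ (hWm n (m+1)) _ (hWm n m) hgt.le
            linarith
          · linarith
    have haL : ∀ m, a m ≤ L := by
      intro m; rw [ha]
      by_cases h : W n (m+1) = W n m
      · rw [if_pos h]; exact hL
      · rw [if_neg h]
        have hden : 0 < |W n (m+1) - W n m| := abs_pos.mpr (sub_ne_zero.mpr h)
        calc (V (W n m) - V (W n (m+1))) / (W n (m+1) - W n m)
            ≤ |(V (W n m) - V (W n (m+1))) / (W n (m+1) - W n m)| := le_abs_self _
          _ = |V (W n m) - V (W n (m+1))| / |W n (m+1) - W n m| := abs_div _ _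
          _ ≤ L := by
              rw [div_le_iff₀ hden]
              calc |V (W n m) - V (W n (m+1))| ≤ L * |W n m - W n (m+1)| := hVlip _ _
                _ = L * |W n (m+1) - W n m| := by rw [abs_sub_comm]
    have hΔb : ∀ m, |W n (m+1) - W n m| ≤ 1 := by
      intro m
      rw [abs_le]
      constructor
      · linarith [(hWm n (m+1)).1, (hWm n m).2]
      · linarith [(hWm n (m+1)).2, (hWm n m).1]
    obtain ⟨g, hg⟩ : ∃ g : ℤ → ℝ, ∀ m, g m = a m * W n m * (W n (m+1) - W n m) :=
      ⟨_, fun _ => rfl⟩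
    have hgbd : ∀ m, |g m| ≤ L := by
      intro m
      rw [hg, abs_mul, abs_mul]
      calc |a m| * |W n m| * |W n (m+1) - W n m| ≤ L * 1 * 1 := by
            gcongr
            · rw [abs_of_nonneg (ha0 m)]; exact haL m
            · rw [abs_of_nonneg (hWm n m).1]; exact (hWm n m).2
            · exact hΔb m
        _ = L := by ring
    obtain ⟨T, hTdef⟩ : ∃ T : ℤ → ℝ, ∀ j, T j = ∑' k : ℕ, γ k * g ((j+1) + (k:ℤ)) :=
      ⟨_, fun _ => rfl⟩
    have hTbd : ∀ j, |T j| ≤ L := by intro j; rw [hTdef]; exact habs_tsum g L hgbd (j+1)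
    have hTrec : ∀ j, T j = γ0 * g (j+1) + (1-γ0) * T (j+1) := by
      intro j; rw [hTdef, hTdef]; exact hsplit g L hgbd (j+1)
    -- the fundamental pointwise identity Id1
    have hId1 : ∀ m, γ0 * (F (m+1) - F m) = V (W n m) * (W n m - W n (m-1))
        - (1-γ0) * V (W n m) * (W n (m+1) - W n m)
        - γ0 * (ρ n m * a m) * (W n (m+1) - W n m) := by
      intro m
      have e1 : γ0 * ρ n m = W n m - (1-γ0) * W n (m+1) := by
        have := hWid n m; linarith
      have e2 : γ0 * ρ n (m-1) = W n (m-1) - (1-γ0) * W n m := by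
        have := hWid n (m-1); rw [sub_add_cancel] at this; linarith
      have e3 := ha1 m
      rw [hF, hF]
      simp only [add_sub_cancel_right]
      linear_combination V (W n m) * e1 - V (W n m) * e2 - γ0 * ρ n m * e3
    -- Id2 via geometric decay
    obtain ⟨P, hP⟩ : ∃ P : ℤ → ℝ, ∀ j, P j = γ0 * (F (j+1) - S (j+1)) := ⟨_, fun _ => rfl⟩
    obtain ⟨Q, hQ⟩ : ∃ Q : ℤ → ℝ, ∀ j,
        Q j = -(V (W n (j+1)) * (W n (j+1) - W n j)) + T j := ⟨_, fun _ => rfl⟩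
    have hPrec : ∀ j, P j - (1-γ0) * P (j+1) = γ0 * (F (j+1) - F (j+1+1)) := by
      intro j
      rw [hP, hP]
      linear_combination (-γ0) * hSrec (j+1)
    have hQrec : ∀ j, Q j - (1-γ0) * Q (j+1) = γ0 * (F (j+1) - F (j+1+1)) := by
      intro j
      have e3 := ha1 (j+1)
      have e1 : γ0 * ρ n (j+1) = W n (j+1) - (1-γ0) * W n (j+1+1) := by
        have := hWid n (j+1); linarith
      have hid := hId1 (j+1)
      rw [add_sub_cancel_right] at hid
      have htr := hTrec j
      rw [hQ, hQ]
      linear_combination htr + γ0 * hg (j+1) + hid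
        - ((1-γ0) * (W n (j+1+1) - W n (j+1))) * e3
        - (a (j+1) * (W n (j+1+1) - W n (j+1))) * e1
    have hPQ : ∀ j, P j = Q j := by
      have hbd : ∀ j, |P j - Q j| ≤ 2*M + (M + L) := by
        intro j
        have h1 : |P j| ≤ 2*M := by
          rw [hP, abs_mul, abs_of_nonneg hγ0pos.le]
          have h2 : |F (j+1) - S (j+1)| ≤ 2*M := by
            calc |F (j+1) - S (j+1)| ≤ |F (j+1)| + |S (j+1)| := abs_sub _ _
              _ ≤ 2*M := by linarith [hFbd (j+1), hSbd (j+1)]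
          nlinarith [abs_nonneg (F (j+1) - S (j+1))]
        have h2 : |Q j| ≤ M + L := by
          rw [hQ]
          calc |-(V (W n (j+1)) * (W n (j+1) - W n j)) + T j|
              ≤ |-(V (W n (j+1)) * (W n (j+1) - W n j))| + |T j| := abs_add_le _ _
            _ = |V (W n (j+1)) * (W n (j+1) - W n j)| + |T j| := by rw [abs_neg]
            _ ≤ M + L := by
                have h4 := hΔb j
                have h3 : |V (W n (j+1)) * (W n (j+1) - W n j)| ≤ M := by
                  rw [abs_mul, abs_of_nonneg (hVWbd (j+1)).1]
                  nlinarith [(hVWbd (j+1)).1, (hVWbd (j+1)).2, abs_nonneg (W n (j+1) - W n j)]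
                linarith [hTbd j]
        calc |P j - Q j| ≤ |P j| + |Q j| := abs_sub _ _
          _ ≤ 2*M + (M + L) := by linarith
      have hstep : ∀ j, P j - Q j = (1-γ0) * (P (j+1) - Q (j+1)) := by
        intro j
        have := hPrec j; have := hQrec j
        linarith
      have hiter : ∀ N : ℕ, ∀ j, |P j - Q j| ≤ (1-γ0)^N * (2*M + (M+L)) := by
        intro N
        induction N with
        | zero => simpa using hbd
        | succ N ih =>
          intro j
          rw [hstep j, abs_mul, abs_of_nonneg h1γpos.le]
          calc (1-γ0) * |P (j+1) - Q (j+1)| ≤ (1-γ0) * ((1-γ0)^N * (2*M + (M+L))) :=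
              mul_le_mul_of_nonneg_left (ih (j+1)) h1γpos.le
            _ = (1-γ0)^(N+1) * (2*M + (M+L)) := by ring
      intro j
      have hlim : Filter.Tendsto (fun N : ℕ => (1-γ0)^N * (2*M + (M+L)))
          Filter.atTop (nhds 0) := by
        have h0 : Filter.Tendsto (fun N : ℕ => (1-γ0)^N) Filter.atTop (nhds 0) :=
          tendsto_pow_atTop_nhds_zero_of_lt_one h1γpos.le (by linarith)
        simpa using h0.mul_const (2*M + (M+L))
      have hle : |P j - Q j| ≤ 0 := ge_of_tendsto' hlim (fun N => hiter N j)
      have := abs_nonneg (P j - Q j)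
      have : |P j - Q j| = 0 := le_antisymm hle this
      have := abs_eq_zero.mp this
      linarith
    -- the structural formula for the new differences
    obtain ⟨B, hB⟩ : ∃ B : ℤ → ℝ, ∀ j, B j = 1 - lam*(1-γ0)*V (W n j)
        - lam*γ0*V (W n (j+1)) - lam*γ0*(ρ n j * a j) := ⟨_, fun _ => rfl⟩
    have hclaim : ∀ j, W (n+1) (j+1) - W (n+1) j =
        lam * V (W n j) * (W n j - W n (j-1)) + B j * (W n (j+1) - W n j)
          + lam * γ0 * T j := by
      intro j
      have h1 := hWupd (j+1)
      have h2 := hWupd j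
      have hs := hSrec j
      have hid := hId1 j
      have hpq := hPQ j
      rw [hP, hQ] at hpq
      rw [hB]
      linear_combination h1 - h2 + lam * γ0 * hs + lam * hid + lam * γ0 * hpq
    have hcol : ∀ m, lam * V (W n (m+1)) + B m + lam * γ0 * (a m * W n m) = 1 := by
      intro m
      have e3 := ha1 m
      have e1 : γ0 * ρ n m = W n m - (1-γ0) * W n (m+1) := by
        have := hWid n m; linarith
      rw [hB]
      linear_combination (-(lam*(1-γ0))) * e3 - (lam * a m) * e1
    have hBnn : ∀ m, 0 ≤ B m := by
      intro m
      have hra : ρ n m * a m ≤ L :=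
        le_trans (mul_le_of_le_one_left (ha0 m) (hρmem n m).2) (haL m)
      have t1 : lam*(1-γ0)*V (W n m) ≤ lam*(1-γ0)*M :=
        mul_le_mul_of_nonneg_left (hVWbd m).2 (by positivity)
      have t2 : lam*γ0*V (W n (m+1)) ≤ lam*γ0*M :=
        mul_le_mul_of_nonneg_left (hVWbd (m+1)).2 (by positivity)
      have t3 : lam*γ0*(ρ n m * a m) ≤ lam*γ0*L :=
        mul_le_mul_of_nonneg_left hra (by positivity)
      have t4 : 0 ≤ lam*L - lam*γ0*L := by nlinarith [mul_nonneg (mul_nonneg hlam.le h1γpos.le) hL]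
      rw [hB]
      nlinarith [t1, t2, t3, t4]
    -- pointwise bound on the new differences, in ℝ≥0∞
    have hgabs : ∀ m : ℤ, |(|g m|)| ≤ L := fun m => by rw [abs_abs]; exact hgbd m
    have hstep1 : ∀ j : ℤ, ENNReal.ofReal |W (n+1) (j+1) - W (n+1) j| ≤
        ENNReal.ofReal (lam * V (W n j) * |W n j - W n (j-1)|)
        + ENNReal.ofReal (B j * |W n (j+1) - W n j|)
        + ∑' k : ℕ, ENNReal.ofReal (γ k * (lam * γ0 * |g ((j+1) + (k:ℤ))|)) := by
      intro j
      have hsumg : Summable (fun k : ℕ => γ k * g ((j+1) + (k:ℤ))) := hsummable g L hgbd (j+1)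
      have hsumga : Summable (fun k : ℕ => γ k * |g ((j+1) + (k:ℤ))|) :=
        hsummable (fun m => |g m|) L hgabs (j+1)
      have habsT : |T j| ≤ ∑' k : ℕ, γ k * |g ((j+1) + (k:ℤ))| := by
        rw [hTdef]
        have h1 : |∑' k : ℕ, γ k * g ((j+1) + (k:ℤ))| ≤ ∑' k : ℕ, |γ k * g ((j+1) + (k:ℤ))| := by
          have := norm_tsum_le_tsum_norm (f := fun k : ℕ => γ k * g ((j+1) + (k:ℤ)))
            (by simpa only [Real.norm_eq_abs] using hsumg.abs)
          simpa only [Real.norm_eq_abs] using this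
        calc |∑' k : ℕ, γ k * g ((j+1) + (k:ℤ))| ≤ ∑' k : ℕ, |γ k * g ((j+1) + (k:ℤ))| := h1
          _ = ∑' k : ℕ, γ k * |g ((j+1) + (k:ℤ))| :=
            tsum_congr fun k => by rw [abs_mul, abs_of_nonneg (hγnn k)]
      have hreal : |W (n+1) (j+1) - W (n+1) j| ≤
          lam * V (W n j) * |W n j - W n (j-1)| + B j * |W n (j+1) - W n j|
          + lam * γ0 * ∑' k : ℕ, γ k * |g ((j+1) + (k:ℤ))| := by
        rw [hclaim j]
        have a1 : |lam * V (W n j) * (W n j - W n (j-1))|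
            = lam * V (W n j) * |W n j - W n (j-1)| := by
          rw [abs_mul, abs_of_nonneg (mul_nonneg hlam.le (hVWbd j).1)]
        have a2 : |B j * (W n (j+1) - W n j)| = B j * |W n (j+1) - W n j| := by
          rw [abs_mul, abs_of_nonneg (hBnn j)]
        have a3 : |lam * γ0 * T j| ≤ lam * γ0 * ∑' k : ℕ, γ k * |g ((j+1) + (k:ℤ))| := by
          rw [abs_mul, abs_of_nonneg (mul_nonneg hlam.le hγ0pos.le)]
          exact mul_le_mul_of_nonneg_left habsT (mul_nonneg hlam.le hγ0pos.le)
        calc |lam * V (W n j) * (W n j - W n (j-1)) + B j * (W n (j+1) - W n j)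
              + lam * γ0 * T j|
            ≤ |lam * V (W n j) * (W n j - W n (j-1)) + B j * (W n (j+1) - W n j)|
              + |lam * γ0 * T j| := abs_add_le _ _
          _ ≤ |lam * V (W n j) * (W n j - W n (j-1))| + |B j * (W n (j+1) - W n j)|
              + |lam * γ0 * T j| := by linarith [abs_add_le (lam * V (W n j) * (W n j - W n (j-1))) (B j * (W n (j+1) - W n j))]
          _ ≤ lam * V (W n j) * |W n j - W n (j-1)| + B j * |W n (j+1) - W n j|
              + lam * γ0 * ∑' k : ℕ, γ k * |g ((j+1) + (k:ℤ))| := by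
              rw [a1, a2]; linarith [a3]
      have hofr : ENNReal.ofReal (lam * γ0 * ∑' k : ℕ, γ k * |g ((j+1) + (k:ℤ))|)
          = ∑' k : ℕ, ENNReal.ofReal (γ k * (lam * γ0 * |g ((j+1) + (k:ℤ))|)) := by
        rw [← tsum_mul_left]
        rw [show (fun k : ℕ => lam * γ0 * (γ k * |g ((j+1) + (k:ℤ))|))
            = fun k : ℕ => γ k * (lam * γ0 * |g ((j+1) + (k:ℤ))|) from funext fun k => by ring]
        exact ENNReal.ofReal_tsum_of_nonneg
          (fun k => mul_nonneg (hγnn k) (by positivity))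
          (by
            have : Summable (fun k : ℕ => (lam * γ0) * (γ k * |g ((j+1) + (k:ℤ))|)) :=
              hsumga.mul_left (lam * γ0)
            exact this.congr fun k => by ring)
      calc ENNReal.ofReal |W (n+1) (j+1) - W (n+1) j|
          ≤ ENNReal.ofReal (lam * V (W n j) * |W n j - W n (j-1)| + B j * |W n (j+1) - W n j|
              + lam * γ0 * ∑' k : ℕ, γ k * |g ((j+1) + (k:ℤ))|) :=
            ENNReal.ofReal_le_ofReal hreal
        _ ≤ ENNReal.ofReal (lam * V (W n j) * |W n j - W n (j-1)|
              + B j * |W n (j+1) - W n j|)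
            + ENNReal.ofReal (lam * γ0 * ∑' k : ℕ, γ k * |g ((j+1) + (k:ℤ))|) :=
            ENNReal.ofReal_add_le
        _ ≤ ENNReal.ofReal (lam * V (W n j) * |W n j - W n (j-1)|)
            + ENNReal.ofReal (B j * |W n (j+1) - W n j|)
            + ENNReal.ofReal (lam * γ0 * ∑' k : ℕ, γ k * |g ((j+1) + (k:ℤ))|) :=
            add_le_add_left ENNReal.ofReal_add_le _
        _ = ENNReal.ofReal (lam * V (W n j) * |W n j - W n (j-1)|)
            + ENNReal.ofReal (B j * |W n (j+1) - W n j|)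
            + ∑' k : ℕ, ENNReal.ofReal (γ k * (lam * γ0 * |g ((j+1) + (k:ℤ))|)) := by
            rw [hofr]
    calc ∑' j : ℤ, ENNReal.ofReal |W (n+1) (j+1) - W (n+1) j|
        ≤ ∑' j : ℤ, (ENNReal.ofReal (lam * V (W n j) * |W n j - W n (j-1)|)
          + ENNReal.ofReal (B j * |W n (j+1) - W n j|)
          + ∑' k : ℕ, ENNReal.ofReal (γ k * (lam * γ0 * |g ((j+1) + (k:ℤ))|))) :=
          ENNReal.tsum_le_tsum hstep1
      _ = (∑' j : ℤ, ENNReal.ofReal (lam * V (W n j) * |W n j - W n (j-1)|))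
          + (∑' j : ℤ, ENNReal.ofReal (B j * |W n (j+1) - W n j|))
          + ∑' j : ℤ, ∑' k : ℕ, ENNReal.ofReal (γ k * (lam * γ0 * |g ((j+1) + (k:ℤ))|)) := by
          rw [ENNReal.tsum_add, ENNReal.tsum_add]
      _ = (∑' m : ℤ, ENNReal.ofReal (lam * V (W n (m+1)) * |W n (m+1) - W n m|))
          + (∑' m : ℤ, ENNReal.ofReal (B m * |W n (m+1) - W n m|))
          + ∑' m : ℤ, ENNReal.ofReal (lam * γ0 * |g m|) := by
          congr 1
          · congr 1
            rw [← hshift (fun i : ℤ => ENNReal.ofReal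
              (lam * V (W n i) * |W n i - W n (i-1)|)) 1]
            exact tsum_congr fun m => by rw [add_sub_cancel_right]
          · calc ∑' j : ℤ, ∑' k : ℕ, ENNReal.ofReal (γ k * (lam * γ0 * |g ((j+1) + (k:ℤ))|))
                = ∑' i : ℤ, ∑' k : ℕ, ENNReal.ofReal (γ k * (lam * γ0 * |g (i + (k:ℤ))|)) :=
                  hshift (fun i : ℤ => ∑' k : ℕ,
                    ENNReal.ofReal (γ k * (lam * γ0 * |g (i + (k:ℤ))|))) 1
              _ = ∑' m : ℤ, ENNReal.ofReal (lam * γ0 * |g m|) :=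
                  hswap (fun m => lam * γ0 * |g m|) (fun m => by positivity)
      _ = ∑' m : ℤ, ENNReal.ofReal |W n (m+1) - W n m| := by
          rw [← ENNReal.tsum_add, ← ENNReal.tsum_add]
          refine tsum_congr fun m => ?_
          have n1 : 0 ≤ lam * V (W n (m+1)) * |W n (m+1) - W n m| :=
            mul_nonneg (mul_nonneg hlam.le (hVWbd (m+1)).1) (abs_nonneg _)
          have n2 : 0 ≤ B m * |W n (m+1) - W n m| := mul_nonneg (hBnn m) (abs_nonneg _)
          have n3 : 0 ≤ lam * γ0 * |g m| := by positivity
          rw [← ENNReal.ofReal_add n1 n2, ← ENNReal.ofReal_add (add_nonneg n1 n2) n3]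
          congr 1
          have hgm : |g m| = a m * W n m * |W n (m+1) - W n m| := by
            rw [hg, abs_mul, abs_of_nonneg (mul_nonneg (ha0 m) (hWm n m).1)]
          rw [hgm]
          linear_combination |W n (m+1) - W n m| * hcol m
  ---- Part 2 base case
  have key2 : ∑' j : ℤ, ENNReal.ofReal |W 0 (j+1) - W 0 j| ≤
      ∑' j : ℤ, ENNReal.ofReal |ρ0 (j+1) - ρ0 j| := by
    obtain ⟨d, hd⟩ : ∃ d : ℤ → ℝ, ∀ m, d m = ρ0 (m+1) - ρ0 m := ⟨_, fun _ => rfl⟩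
    have hdb : ∀ m, |d m| ≤ 2 := by
      intro m; rw [hd, abs_le]
      constructor
      · linarith [(hρ0 (m+1)).1, (hρ0 m).2]
      · linarith [(hρ0 (m+1)).2, (hρ0 m).1]
    have hdabs : ∀ m : ℤ, |(|d m|)| ≤ 2 := fun m => by rw [abs_abs]; exact hdb m
    have hptw : ∀ j : ℤ, |W 0 (j+1) - W 0 j| ≤ ∑' k : ℕ, γ k * |d (j + (k:ℤ))| := by
      intro j
      have hs1 : Summable (fun k : ℕ => γ k * ρ 0 ((j+1) + (k:ℤ))) :=
        hsummable _ 1 (hρb 0) (j+1)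
      have hs2 : Summable (fun k : ℕ => γ k * ρ 0 (j + (k:ℤ))) := hsummable _ 1 (hρb 0) j
      have hsd : Summable (fun k : ℕ => γ k * d (j + (k:ℤ))) := hsummable d 2 hdb j
      have heq : W 0 (j+1) - W 0 j = ∑' k : ℕ, γ k * d (j + (k:ℤ)) := by
        rw [hW 0 (j+1), hW 0 j, ← Summable.tsum_sub hs1 hs2]
        refine tsum_congr fun k => ?_
        have hidx : (j+1) + (k:ℤ) = (j + (k:ℤ)) + 1 := by ring
        rw [hidx, hd, hinit, hinit]
        ring
      rw [heq]
      have h1 : |∑' k : ℕ, γ k * d (j + (k:ℤ))| ≤ ∑' k : ℕ, |γ k * d (j + (k:ℤ))| := by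
        have := norm_tsum_le_tsum_norm (f := fun k : ℕ => γ k * d (j + (k:ℤ)))
          (by simpa only [Real.norm_eq_abs] using hsd.abs)
        simpa only [Real.norm_eq_abs] using this
      calc |∑' k : ℕ, γ k * d (j + (k:ℤ))| ≤ ∑' k : ℕ, |γ k * d (j + (k:ℤ))| := h1
        _ = ∑' k : ℕ, γ k * |d (j + (k:ℤ))| :=
          tsum_congr fun k => by rw [abs_mul, abs_of_nonneg (hγnn k)]
    calc ∑' j : ℤ, ENNReal.ofReal |W 0 (j+1) - W 0 j|
        ≤ ∑' j : ℤ, ENNReal.ofReal (∑' k : ℕ, γ k * |d (j + (k:ℤ))|) :=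
          ENNReal.tsum_le_tsum fun j => ENNReal.ofReal_le_ofReal (hptw j)
      _ = ∑' j : ℤ, ∑' k : ℕ, ENNReal.ofReal (γ k * |d (j + (k:ℤ))|) :=
          tsum_congr fun j => ENNReal.ofReal_tsum_of_nonneg
            (fun k => mul_nonneg (hγnn k) (abs_nonneg _))
            (hsummable (fun m => |d m|) 2 hdabs j)
      _ = ∑' m : ℤ, ENNReal.ofReal (|d m|) := hswap (fun m => |d m|) (fun m => abs_nonneg _)
      _ = ∑' j : ℤ, ENNReal.ofReal |ρ0 (j+1) - ρ0 j| := tsum_congr fun m => by rw [hd]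
  ---- assemble
  intro n
  refine ⟨key1 n, ?_⟩
  induction n with
  | zero => exact key2
  | succ n ih => exact le_trans (key1 n) ih
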